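/- Let G be a finite graph with vertex set V and let d(v) denote the degree of vertex v. Then G contains an independent set of size at least the sum over v ∈ V of 1/(d(v)+1). -/

import Mathlib

/-- Interpret a bit string as a natural-number program index. -/
def bitsToNat (p : List Bool) : ℕ :=
  p.foldl (fun n b => 2 * n + (if b then 1 else 0)) 1

/-- The fixed universal machine: program `p`, with conditioning information `y`,
outputs `x`. -/
def UnivOut (p y x : List Bool) : Prop :=
  (Encodable.encode x : ℕ) ∈
    (Denumerable.ofNat Nat.Partrec.Code (bitsToNat p)).eval (Encodable.encode y)

/-- Conditional plain Kolmogorov complexity `C(x ∣ y)`. -/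
noncomputable def KC (x y : List Bool) : ℕ :=
  sInf { L | ∃ p : List Bool, p.length = L ∧ UnivOut p y x }

/-- Plain Kolmogorov complexity `C(x)`. -/
noncomputable def K (x : List Bool) : ℕ := KC x []

lemma caro_wei_aux {V : Type*} [DecidableEq V] (G : SimpleGraph V) [DecidableRel G.Adj] :
    ∀ s : Finset V, ∃ I : Finset V, I ⊆ s ∧
      (I : Set V).Pairwise (fun u v => ¬ G.Adj u v) ∧
      ∑ v ∈ s, (1 : ℝ) / ((s.filter (G.Adj v)).card + 1) ≤ (I.card : ℝ) := by
  intro s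
  induction s using Finset.strongInductionOn with
  | _ s ih =>
  rcases s.eq_empty_or_nonempty with rfl | hs
  · exact ⟨∅, by simp⟩
  obtain ⟨v, hv, hmin⟩ := s.exists_min_image (fun u => ((s.filter (G.Adj u)).card : ℝ)) hs
  set d : V → ℕ := fun u => (s.filter (G.Adj u)).card with hd
  set t : Finset V :=  s.filter (fun u => ¬ (u = v ∨ G.Adj v u)) with ht
  have htsub : t ⊆ s := Finset.filter_subset _ _
  have hvt : v ∉ t := by simp [ht]
  have htss : t ⊂ s := Finset.ssubset_iff_of_subset htsub |>.2 ⟨v, hv, hvt⟩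
  obtain ⟨I, hIs, hIind, hIsum⟩ := ih t htss
  refine ⟨insert v I, ?_, ?_, ?_⟩
  · exact Finset.insert_subset hv (hIs.trans htsub)
  · intro a ha b hb hab
    have key : ∀ u ∈ I, ¬ G.Adj v u := by
      intro u hu
      have := hIs hu
      simp [ht] at this
      exact this.2.2
    simp only [Finset.coe_insert, Set.mem_insert_iff, Finset.mem_coe] at ha hb
    rcases ha with rfl | ha
    · rcases hb with rfl | hb
      · exact absurd rfl hab
      · exact key b hb
    · rcases hb with rfl | hb
      · exact fun h => key a ha h.symm
      · exact hIind ha hb hab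
  · -- sum bound
    have hvI : v ∉ I := fun h => hvt (hIs h)
    rw [Finset.card_insert_of_notMem hvI]
    set N : Finset V := s.filter (fun u => u = v ∨ G.Adj v u) with hN
    have hsplit : ∑ u ∈ N, (1:ℝ)/(d u + 1) + ∑ u ∈ t, (1:ℝ)/(d u + 1)
        = ∑ u ∈ s, (1:ℝ)/(d u + 1) := Finset.sum_filter_add_sum_filter_not s _ _
    have hNcard : N.card = d v + 1 := by
      have : N = insert v (s.filter (G.Adj v)) := by
        ext u
        simp only [hN, Finset.mem_filter, Finset.mem_insert]
        constructor
        · rintro ⟨hu, rfl | h⟩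
          · exact Or.inl rfl
          · exact Or.inr ⟨hu, h⟩
        · rintro (rfl | ⟨hu, h⟩)
          · exact ⟨hv, Or.inl rfl⟩
          · exact ⟨hu, Or.inr h⟩
      rw [this, Finset.card_insert_of_notMem (by simp)]
    have hpos : ∀ u : V, (0:ℝ) < d u + 1 := by
      intro u; positivity
    have hNle : ∑ u ∈ N, (1:ℝ)/(d u + 1) ≤ 1 := by
      have h1 : ∀ u ∈ N, (1:ℝ)/(d u + 1) ≤ 1/(d v + 1) := by
        intro u hu
        apply one_div_le_one_div_of_le (hpos v)
        have := hmin u (Finset.filter_subset _ _ hu)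
        linarith
      calc ∑ u ∈ N, (1:ℝ)/(d u + 1) ≤ N.card • ((1:ℝ)/(d v + 1)) :=
            Finset.sum_le_card_nsmul _ _ _ h1
        _ = (d v + 1) * (1/(d v + 1)) := by
            rw [hNcard]; push_cast [nsmul_eq_mul]; ring
        _ = 1 := by
            field_simp
    have htle : ∑ u ∈ t, (1:ℝ)/(d u + 1) ≤ ∑ u ∈ t, (1:ℝ)/((t.filter (G.Adj u)).card + 1) := by
      apply Finset.sum_le_sum
      intro u hu
      apply one_div_le_one_div_of_le (by positivity)
      have : (t.filter (G.Adj u)).card ≤ d u :=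
        Finset.card_le_card (Finset.filter_subset_filter _ htsub)
      exact_mod_cast add_le_add_left (Nat.cast_le.mpr this) 1
    push_cast
    calc ∑ u ∈ s, (1:ℝ)/(d u + 1)
        = ∑ u ∈ N, (1:ℝ)/(d u + 1) + ∑ u ∈ t, (1:ℝ)/(d u + 1) := hsplit.symm
      _ ≤ 1 + ∑ u ∈ t, (1:ℝ)/((t.filter (G.Adj u)).card + 1) := by
          exact add_le_add hNle htle
      _ ≤ 1 + I.card := by linarith
      _ = (I.card : ℝ) + 1 := by ring

theorem caro_wei {V : Type*} [Fintype V] (G : SimpleGraph V) [DecidableRel G.Adj] :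
    ∃ I : Finset V, (I : Set V).Pairwise (fun u v => ¬ G.Adj u v) ∧
      ∑ v : V, (1 : ℝ) / (G.degree v + 1) ≤ (I.card : ℝ) := by
  classical
  obtain ⟨I, _, hind, hsum⟩ := caro_wei_aux G Finset.univ
  refine ⟨I, hind, ?_⟩
  have hdeg : ∀ v : V, G.degree v = (Finset.univ.filter (G.Adj v)).card := by
    intro v
    rw [← SimpleGraph.card_neighborFinset_eq_degree]
    congr 1
    ext u
    simp [SimpleGraph.mem_neighborFinset]
  refine le_trans (le_of_eq (Finset.sum_congr rfl fun v _ => ?_)) hsum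
  rw [hdeg v]
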